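/- Let P be a k-tuple over [n] and T ⊆ [n]. (1) If |T| < k, then D_P(AND_T) is identically 0 on S(n,p). (2) If |T| = k, then D_P(AND_T) is identically 0 unless every pair of P contains exactly one element of T, in which case D_P(AND_T) equals Ψ_P/2^k or −Ψ_P/2^k. -/

import Mathlib

open Finset
open scoped Classical

/-- A point of the slice `S(n,p)`: a Boolean vector whose number of ones equals `p * n`. -/
abbrev SlicePoint (n : ℕ) (p : ℝ) : Type :=
  {x : Fin n → Bool // ((Finset.univ.filter (fun i => x i = true)).card : ℝ) = p * n}

variable {n : ℕ} {p : ℝ}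

/-- Expectation with respect to the uniform measure on the slice. -/
noncomputable def sExp (f : SlicePoint n p → ℝ) : ℝ :=
  (∑ x : SlicePoint n p, f x) / (Fintype.card (SlicePoint n p) : ℝ)

/-- The inner product `⟨f,g⟩ = E_x [f x * g x]` on functions on the slice. -/
noncomputable def sInner (f g : SlicePoint n p → ℝ) : ℝ :=
  sExp (fun x => f x * g x)

/-- `‖f‖₂² = E_x [f x ^ 2]`. -/
noncomputable def sNormSq (f : SlicePoint n p → ℝ) : ℝ := sInner f f

/-- `‖f‖₂`. -/
noncomputable def sNorm (f : SlicePoint n p → ℝ) : ℝ := Real.sqrt (sNormSq f)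

/-- The `i`-th coordinate of a slice point, viewed as a real number in `{0,1}`. -/
def coordR (x : SlicePoint n p) (i : Fin n) : ℝ := if x.1 i then 1 else 0

/-- `AND_T (x) = ∏_{i ∈ T} x_i`. -/
def andT (T : Finset (Fin n)) : SlicePoint n p → ℝ := fun x => ∏ i ∈ T, coordR x i

/-- The space `L_k` of functions of degree at most `k` on the slice. -/
def degLE (n : ℕ) (p : ℝ) (k : ℕ) : Submodule ℝ (SlicePoint n p → ℝ) :=
  Submodule.span ℝ {g | ∃ T : Finset (Fin n), T.card ≤ k ∧ g = andT T}

/-- The space `L_{k-1}` (i.e. spanned by `AND_T` with `|T| < k`). -/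
def degLT (n : ℕ) (p : ℝ) (k : ℕ) : Submodule ℝ (SlicePoint n p → ℝ) :=
  Submodule.span ℝ {g | ∃ T : Finset (Fin n), T.card < k ∧ g = andT T}

/-- `fk` is the orthogonal projection `f^{≤ k}` of `f` onto `L_k`. -/
def IsLowProj (n : ℕ) (p : ℝ) (k : ℕ) (f fk : SlicePoint n p → ℝ) : Prop :=
  fk ∈ degLE n p k ∧ ∀ g ∈ degLE n p k, sInner (f - fk) g = 0

/-- `fk` is the orthogonal projection of `f` onto the span of `AND_T`, `|T| < k`. -/
def IsLowProjLT (n : ℕ) (p : ℝ) (k : ℕ) (f fk : SlicePoint n p → ℝ) : Prop :=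
  fk ∈ degLT n p k ∧ ∀ g ∈ degLT n p k, sInner (f - fk) g = 0

/-- `Pr_x [f x ≠ g x]` under the uniform measure on the slice. -/
noncomputable def probNe (f g : SlicePoint n p → ℝ) : ℝ :=
  sExp (fun x => if f x = g x then 0 else 1)

/-- The action of a permutation on a slice point: `(x^π)_{π i} = x_i`. -/
def permPt (π : Equiv.Perm (Fin n)) (x : SlicePoint n p) : SlicePoint n p :=
  ⟨fun i => x.1 (π.symm i), by
    have h : (Finset.univ.filter (fun i => x.1 (π.symm i) = true)) =
        (Finset.univ.filter (fun i => x.1 i = true)).map π.toEmbedding := by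
      ext i
      simp [Finset.mem_map_equiv]
    rw [h, Finset.card_map]
    exact x.2⟩

/-- The derivative operator `D_{ij} f = (f - f^{(ij)})/2`. -/
noncomputable def Dij (i j : Fin n) (f : SlicePoint n p → ℝ) : SlicePoint n p → ℝ :=
  fun x => (f x - f (permPt (Equiv.swap i j) x)) / 2

/-- The derivative operator `D_P` associated with a set `P` of pairs,
obtained by composing the `D_{ab}` for `(a,b) ∈ P` (these commute for tuples). -/
noncomputable def DP (P : Finset (Fin n × Fin n)) (f : SlicePoint n p → ℝ) :
    SlicePoint n p → ℝ :=
  P.toList.foldr (fun q g => Dij q.1 q.2 g) f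

/-- `P` is a `k`-tuple: `k` pairs `(a,b)` with `a < b`, all `2k` entries distinct. -/
def IsTuple {n : ℕ} (k : ℕ) (P : Finset (Fin n × Fin n)) : Prop :=
  P.card = k ∧ (∀ q ∈ P, q.1 < q.2) ∧
    ∀ q ∈ P, ∀ r ∈ P, q ≠ r →
      q.1 ≠ r.1 ∧ q.1 ≠ r.2 ∧ q.2 ≠ r.1 ∧ q.2 ≠ r.2

/-- `P` is shifted: for every pair `(a,b) ∈ P`, every `a' ≤ a` occurs as an entry of `P`. -/
def IsShifted {n : ℕ} (P : Finset (Fin n × Fin n)) : Prop :=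
  ∀ q ∈ P, ∀ a : Fin n, a ≤ q.1 → ∃ r ∈ P, r.1 = a ∨ r.2 = a

/-- `P` is sorted: `a_i < a_j ↔ b_i < b_j`. -/
def IsSorted {n : ℕ} (P : Finset (Fin n × Fin n)) : Prop :=
  ∀ q ∈ P, ∀ r ∈ P, (q.1 < r.1 ↔ q.2 < r.2)

/-- `Ψ_P (x) = ∏_{(a,b) ∈ P} (x_b - x_a)`. -/
def PsiP (P : Finset (Fin n × Fin n)) : SlicePoint n p → ℝ :=
  fun x => ∏ q ∈ P, (coordR x q.2 - coordR x q.1)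

/-- The slice Laplacian `L f = f - (1 / C(n,2)) ∑_{i<j} f^{(ij)}`. -/
noncomputable def sliceLap (f : SlicePoint n p → ℝ) : SlicePoint n p → ℝ :=
  fun x => f x -
    (∑ q ∈ Finset.univ.filter (fun q : Fin n × Fin n => q.1 < q.2),
      f (permPt (Equiv.swap q.1 q.2) x)) / (n.choose 2 : ℝ)

/-- The noise operator `H_t = exp (-t L) = ∑_l (-t)^l L^l / l!`. -/
noncomputable def Ht (t : ℝ) (f : SlicePoint n p → ℝ) : SlicePoint n p → ℝ :=
  fun x => ∑' l : ℕ, ((-t) ^ l / (l.factorial : ℝ)) * (sliceLap^[l] f) x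

/-- The averaging operator `E_I f (x) = E_{Q ∼ S_I} [f (x^Q)]`, averaging over a uniformly
random permutation of the coordinates in `I` (fixing the coordinates outside `I`). -/
noncomputable def avgI (I : Finset (Fin n)) (f : SlicePoint n p → ℝ) : SlicePoint n p → ℝ :=
  fun x => (∑ σ : {σ : Equiv.Perm (Fin n) // ∀ i ∉ I, σ i = i}, f (permPt σ.1 x)) /
    (Fintype.card {σ : Equiv.Perm (Fin n) // ∀ i ∉ I, σ i = i} : ℝ)

/-- The conditional variance `V_I (f) = ‖f - E_I f‖₂²`. -/
noncomputable def condVar (I : Finset (Fin n)) (f : SlicePoint n p → ℝ) : ℝ :=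
  sNormSq (f - avgI I f)

/-- Expectation with respect to the uniform measure on the discrete cube. -/
noncomputable def cExp {n : ℕ} (f : (Fin n → Bool) → ℝ) : ℝ :=
  (∑ x : Fin n → Bool, f x) / (2 ^ n : ℝ)

/-- The Fourier–Walsh coefficient `f̂ (S) = E_x [f x * χ_S x]`. -/
noncomputable def walshCoeff {n : ℕ} (f : (Fin n → Bool) → ℝ) (S : Finset (Fin n)) : ℝ :=
  cExp (fun x => f x * ∏ i ∈ S, (if x i then (-1 : ℝ) else 1))

/-- The Fourier weight of `f` beyond degree `k`: `W^{>k} (f) = ∑_{|S| > k} f̂(S)²`. -/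
noncomputable def WAbove {n : ℕ} (k : ℕ) (f : (Fin n → Bool) → ℝ) : ℝ :=
  ∑ S ∈ Finset.univ.filter (fun S : Finset (Fin n) => k < S.card), walshCoeff f S ^ 2

/-- `Pr_x [f x ≠ g x]` under the uniform measure on the cube. -/
noncomputable def cProbNe {n : ℕ} (f g : (Fin n → Bool) → ℝ) : ℝ :=
  cExp (fun x => if f x = g x then 0 else 1)

/-- The action of a permutation on a point of the cube: `(x^π)_{π i} = x_i`. -/
def cPerm {n : ℕ} (π : Equiv.Perm (Fin n)) (x : Fin n → Bool) : Fin n → Bool :=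
  fun i => x (π.symm i)

/-- The derivative operator on the cube. -/
noncomputable def cDij {n : ℕ} (i j : Fin n) (f : (Fin n → Bool) → ℝ) :
    (Fin n → Bool) → ℝ :=
  fun x => (f x - f (cPerm (Equiv.swap i j) x)) / 2

/- ### Auxiliary material for `DP_andT` -/

section DPAux

variable {n : ℕ} {p : ℝ}

lemma coordR_permPt (π : Equiv.Perm (Fin n)) (x : SlicePoint n p) (i : Fin n) :
    coordR (permPt π x) i = coordR x (π.symm i) := rfl

lemma mem_image_swap {a b : Fin n} {T : Finset (Fin n)} {x : Fin n} :
    x ∈ T.image (Equiv.swap a b) ↔ Equiv.swap a b x ∈ T := by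
  constructor
  · intro h
    rcases Finset.mem_image.mp h with ⟨i, hi, rfl⟩
    rwa [Equiv.swap_apply_self]
  · intro h
    exact Finset.mem_image.mpr ⟨_, h, Equiv.swap_apply_self _ _ _⟩

lemma andT_permPt_swap (a b : Fin n) (T : Finset (Fin n)) (x : SlicePoint n p) :
    andT T (permPt (Equiv.swap a b) x) = andT (T.image (Equiv.swap a b)) x := by
  unfold andT
  rw [Finset.prod_image (fun i _ j _ h => (Equiv.swap a b).injective h)]
  refine Finset.prod_congr rfl fun i _ => ?_
  rw [coordR_permPt, Equiv.symm_swap]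

lemma image_swap_of_iff {a b : Fin n} {T : Finset (Fin n)} (h : a ∈ T ↔ b ∈ T) :
    T.image (Equiv.swap a b) = T := by
  ext x
  rw [mem_image_swap]
  rcases eq_or_ne x a with rfl | hxa
  · rw [Equiv.swap_apply_left]; exact h.symm
  rcases eq_or_ne x b with rfl | hxb
  · rw [Equiv.swap_apply_right]; exact h
  · rw [Equiv.swap_apply_of_ne_of_ne hxa hxb]

lemma Dij_andT_bad {a b : Fin n} {T : Finset (Fin n)} (h : a ∈ T ↔ b ∈ T) :
    Dij a b (andT (p := p) T) = 0 := by
  funext x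
  simp only [Dij, andT_permPt_swap, image_swap_of_iff h, Pi.zero_apply]
  ring

lemma image_swap_of_mem_left {a b : Fin n} {T : Finset (Fin n)} (ha : a ∈ T) (hb : b ∉ T) :
    T.image (Equiv.swap a b) = insert b (T.erase a) := by
  have hab : a ≠ b := fun h => hb (h ▸ ha)
  ext x
  rw [mem_image_swap, Finset.mem_insert, Finset.mem_erase]
  rcases eq_or_ne x a with rfl | hxa
  · rw [Equiv.swap_apply_left]; simp [hb, hab]
  rcases eq_or_ne x b with rfl | hxb
  · rw [Equiv.swap_apply_right]; simp [ha]
  · rw [Equiv.swap_apply_of_ne_of_ne hxa hxb]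
    simp [hxa, hxb]

lemma Dij_andT_good {a b : Fin n} {T : Finset (Fin n)} (hab : a ≠ b)
    (h : (a ∈ T ∧ b ∉ T) ∨ (a ∉ T ∧ b ∈ T)) :
    Dij a b (andT (p := p) T) =
      fun x => (if b ∈ T then 1 else -1) * (coordR x b - coordR x a) *
        andT ((T.erase a).erase b) x / 2 := by
  funext x
  rcases h with ⟨ha, hb⟩ | ⟨ha, hb⟩
  · have himg := image_swap_of_mem_left (T := T) ha hb
    have h1 : andT (p := p) T x = coordR x a * andT (T.erase a) x :=
      (Finset.mul_prod_erase T _ ha).symm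
    have h2 : andT (p := p) (insert b (T.erase a)) x = coordR x b * andT (T.erase a) x :=
      Finset.prod_insert (by simp [hb])
    have h3 : (T.erase a).erase b = T.erase a :=
      Finset.erase_eq_of_notMem (by simp [hb])
    simp only [Dij, andT_permPt_swap, himg, h1, h2, h3, if_neg hb]
    ring
  · have himg : T.image (Equiv.swap a b) = insert a (T.erase b) := by
      rw [Equiv.swap_comm]; exact image_swap_of_mem_left hb ha
    have h1 : andT (p := p) T x = coordR x b * andT (T.erase b) x :=
      (Finset.mul_prod_erase T _ hb).symm
    have h2 : andT (p := p) (insert a (T.erase b)) x = coordR x a * andT (T.erase b) x :=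
      Finset.prod_insert (by simp [ha])
    have h3 : (T.erase a).erase b = T.erase b := by
      rw [Finset.erase_eq_of_notMem ha]
    simp only [Dij, andT_permPt_swap, himg, h1, h2, h3, if_pos hb]
    ring

lemma Dij_mul_invariant {a b : Fin n} (h g : SlicePoint n p → ℝ) (c : ℝ)
    (hh : ∀ x, h (permPt (Equiv.swap a b) x) = h x) :
    Dij a b (fun x => h x * g x / c) = fun x => h x * Dij a b g x / c := by
  funext x
  simp only [Dij]
  rw [hh]
  ring

lemma Dij_zero (a b : Fin n) : Dij a b (0 : SlicePoint n p → ℝ) = 0 := by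
  funext x; simp [Dij]

/-- Iterated derivative along a list of pairs. -/
noncomputable def DL (L : List (Fin n × Fin n)) (f : SlicePoint n p → ℝ) :
    SlicePoint n p → ℝ :=
  L.foldr (fun q g => Dij q.1 q.2 g) f

/-- Remove all entries of the pairs in `L` from `T`. -/
def remT (L : List (Fin n × Fin n)) (T : Finset (Fin n)) : Finset (Fin n) :=
  L.foldr (fun q s => (s.erase q.1).erase q.2) T

lemma mem_remT {L : List (Fin n × Fin n)} {T : Finset (Fin n)} {a : Fin n} :
    a ∈ remT L T ↔ a ∈ T ∧ ∀ q ∈ L, a ≠ q.1 ∧ a ≠ q.2 := by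
  induction L with
  | nil => simp [remT]
  | cons q L ih =>
    show a ∈ ((remT L T).erase q.1).erase q.2 ↔ _
    simp only [Finset.mem_erase, ih, List.mem_cons]
    constructor
    · rintro ⟨h2, h1, hT, hL⟩
      exact ⟨hT, by rintro r (rfl | hr); exact ⟨h1, h2⟩; exact hL r hr⟩
    · rintro ⟨hT, h⟩
      exact ⟨(h q (Or.inl rfl)).2, (h q (Or.inl rfl)).1, hT,
        fun r hr => h r (Or.inr hr)⟩

/-- Cross-distinctness of pairs. -/
def PDist (q r : Fin n × Fin n) : Prop :=
  q.1 ≠ r.1 ∧ q.1 ≠ r.2 ∧ q.2 ≠ r.1 ∧ q.2 ≠ r.2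

lemma prod_map_swap_invariant (L : List (Fin n × Fin n)) (a b : Fin n)
    (c : Fin n × Fin n → ℝ)
    (h : ∀ r ∈ L, r.1 ≠ a ∧ r.1 ≠ b ∧ r.2 ≠ a ∧ r.2 ≠ b) (x : SlicePoint n p) :
    (L.map fun r => c r * (coordR (permPt (Equiv.swap a b) x) r.2 -
        coordR (permPt (Equiv.swap a b) x) r.1)).prod =
    (L.map fun r => c r * (coordR x r.2 - coordR x r.1)).prod := by
  congr 1
  refine List.map_congr_left fun r hr => ?_
  obtain ⟨h1, h2, h3, h4⟩ := h r hr
  rw [coordR_permPt, coordR_permPt, Equiv.symm_swap,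
    Equiv.swap_apply_of_ne_of_ne h3 h4, Equiv.swap_apply_of_ne_of_ne h1 h2]

lemma DL_andT_good (L : List (Fin n × Fin n)) (T : Finset (Fin n))
    (hd : L.Pairwise PDist) (hne : ∀ q ∈ L, q.1 ≠ q.2)
    (hgood : ∀ q ∈ L, (q.1 ∈ T ∧ q.2 ∉ T) ∨ (q.1 ∉ T ∧ q.2 ∈ T)) :
    DL L (andT (p := p) T) = fun x =>
      (L.map fun q => (if q.2 ∈ T then (1 : ℝ) else -1) *
          (coordR x q.2 - coordR x q.1)).prod *
        andT (remT L T) x / 2 ^ L.length := by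
  induction L with
  | nil => funext x; simp [DL, remT]
  | cons q L ih =>
    rw [List.pairwise_cons] at hd
    obtain ⟨hq, hd'⟩ := hd
    have hq' : ∀ r ∈ L, r.1 ≠ q.1 ∧ r.1 ≠ q.2 ∧ r.2 ≠ q.1 ∧ r.2 ≠ q.2 := by
      intro r hr
      obtain ⟨h1, h2, h3, h4⟩ := hq r hr
      exact ⟨h1.symm, h3.symm, h2.symm, h4.symm⟩
    have hDL : DL (q :: L) (andT (p := p) T) = Dij q.1 q.2 (DL L (andT (p := p) T)) := rfl
    rw [hDL, ih hd' (fun r hr => hne r (List.mem_cons_of_mem q hr))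
      (fun r hr => hgood r (List.mem_cons_of_mem q hr))]
    rw [Dij_mul_invariant _ _ _
      (fun x => prod_map_swap_invariant L q.1 q.2 _ hq' x)]
    -- membership transfer for q's entries
    have hm1 : q.1 ∈ remT L T ↔ q.1 ∈ T := by
      rw [mem_remT]
      exact ⟨fun h => h.1, fun h => ⟨h, fun r hr =>
        ⟨(hq r hr).1, (hq r hr).2.1⟩⟩⟩
    have hm2 : q.2 ∈ remT L T ↔ q.2 ∈ T := by
      rw [mem_remT]
      exact ⟨fun h => h.1, fun h => ⟨h, fun r hr =>
        ⟨(hq r hr).2.2.1, (hq r hr).2.2.2⟩⟩⟩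
    have hgq : (q.1 ∈ remT L T ∧ q.2 ∉ remT L T) ∨ (q.1 ∉ remT L T ∧ q.2 ∈ remT L T) := by
      rcases hgood q List.mem_cons_self with ⟨h1, h2⟩ | ⟨h1, h2⟩
      · exact Or.inl ⟨hm1.mpr h1, fun h => h2 (hm2.mp h)⟩
      · exact Or.inr ⟨fun h => h1 (hm1.mp h), hm2.mpr h2⟩
    rw [Dij_andT_good (hne q List.mem_cons_self) hgq]
    funext x
    have hrem : remT (q :: L) T = ((remT L T).erase q.1).erase q.2 := rfl
    have hiff : (if q.2 ∈ remT L T then (1 : ℝ) else -1) =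
        (if q.2 ∈ T then (1 : ℝ) else -1) := by
      by_cases h : q.2 ∈ T
      · rw [if_pos h, if_pos (hm2.mpr h)]
      · rw [if_neg h, if_neg (fun h' => h (hm2.mp h'))]
    simp only [List.map_cons, List.prod_cons, List.length_cons, hrem, hiff, pow_succ]
    ring

lemma DL_andT_bad (L : List (Fin n × Fin n)) (T : Finset (Fin n))
    (hd : L.Pairwise PDist) (hne : ∀ q ∈ L, q.1 ≠ q.2)
    (hbad : ∃ q ∈ L, ¬ ((q.1 ∈ T ∧ q.2 ∉ T) ∨ (q.1 ∉ T ∧ q.2 ∈ T))) :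
    DL L (andT (p := p) T) = 0 := by
  induction L with
  | nil => simp at hbad
  | cons q L ih =>
    rw [List.pairwise_cons] at hd
    obtain ⟨hq, hd'⟩ := hd
    have hne' : ∀ r ∈ L, r.1 ≠ r.2 := fun r hr => hne r (List.mem_cons_of_mem q hr)
    have hDL : DL (q :: L) (andT (p := p) T) = Dij q.1 q.2 (DL L (andT (p := p) T)) := rfl
    by_cases hall : ∀ r ∈ L, (r.1 ∈ T ∧ r.2 ∉ T) ∨ (r.1 ∉ T ∧ r.2 ∈ T)
    · -- then the bad pair is q itself
      have hqbad : ¬ ((q.1 ∈ T ∧ q.2 ∉ T) ∨ (q.1 ∉ T ∧ q.2 ∈ T)) := by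
        rcases hbad with ⟨r, hr, hrbad⟩
        rcases List.mem_cons.mp hr with rfl | hr'
        · exact hrbad
        · exact absurd (hall r hr') hrbad
      have hq' : ∀ r ∈ L, r.1 ≠ q.1 ∧ r.1 ≠ q.2 ∧ r.2 ≠ q.1 ∧ r.2 ≠ q.2 := by
        intro r hr
        obtain ⟨h1, h2, h3, h4⟩ := hq r hr
        exact ⟨h1.symm, h3.symm, h2.symm, h4.symm⟩
      rw [hDL, DL_andT_good L T hd' hne' hall,
        Dij_mul_invariant _ _ _
          (fun x => prod_map_swap_invariant L q.1 q.2 _ hq' x)]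
      have hm1 : q.1 ∈ remT L T ↔ q.1 ∈ T := by
        rw [mem_remT]
        exact ⟨fun h => h.1, fun h => ⟨h, fun r hr =>
          ⟨(hq r hr).1, (hq r hr).2.1⟩⟩⟩
      have hm2 : q.2 ∈ remT L T ↔ q.2 ∈ T := by
        rw [mem_remT]
        exact ⟨fun h => h.1, fun h => ⟨h, fun r hr =>
          ⟨(hq r hr).2.2.1, (hq r hr).2.2.2⟩⟩⟩
      have hTiff : q.1 ∈ T ↔ q.2 ∈ T := by tauto
      have : Dij q.1 q.2 (andT (p := p) (remT L T)) = 0 :=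
        Dij_andT_bad (by rw [hm1, hm2]; exact hTiff)
      rw [this]
      funext x
      simp
    · push_neg at hall
      obtain ⟨r, hr, hrbad⟩ := hall
      rw [hDL, ih hd' hne' ⟨r, hr, by tauto⟩, Dij_zero]

lemma list_prod_pm (l : List ℝ) (h : ∀ x ∈ l, x = 1 ∨ x = -1) :
    l.prod = 1 ∨ l.prod = -1 := by
  induction l with
  | nil => left; simp
  | cons a l ih =>
    rcases h a List.mem_cons_self with rfl | rfl <;>
      rcases ih (fun x hx => h x (List.mem_cons_of_mem _ hx)) with h' | h' <;>
        simp [List.prod_cons, h']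

end DPAux
/-- Let `P` be a `k`-tuple and `T ⊆ [n]`. (1) If `|T| < k` then `D_P (AND_T) ≡ 0`.
(2) If `|T| = k` then `D_P (AND_T) ≡ 0`, unless every pair of `P` contains exactly one
element of `T`, in which case `D_P (AND_T) = ± Ψ_P / 2^k`. -/
theorem DP_andT (n : ℕ) (p : ℝ) (hp : 0 < p) (hp1 : p ≤ 1)
    (hpn : ∃ m : ℤ, (m : ℝ) = p * n) (k : ℕ)
    (P : Finset (Fin n × Fin n)) (hP : IsTuple k P) (T : Finset (Fin n)) :
    (T.card < k → DP P (andT (p := p) T) = 0) ∧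
    (T.card = k →
      (¬ (∀ q ∈ P, (q.1 ∈ T ∧ q.2 ∉ T) ∨ (q.1 ∉ T ∧ q.2 ∈ T)) →
        DP P (andT (p := p) T) = 0) ∧
      ((∀ q ∈ P, (q.1 ∈ T ∧ q.2 ∉ T) ∨ (q.1 ∉ T ∧ q.2 ∈ T)) →
        DP P (andT (p := p) T) = (fun x => PsiP P x / 2 ^ k) ∨
        DP P (andT (p := p) T) = (fun x => -(PsiP P x) / 2 ^ k))) := by
  classical
  obtain ⟨hcard, hlt, hdist⟩ := hP
  set L := P.toList with hLdef
  have hmem : ∀ q : Fin n × Fin n, q ∈ L ↔ q ∈ P := fun q => Finset.mem_toList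
  have hne : ∀ q ∈ L, q.1 ≠ q.2 := fun q hq => ne_of_lt (hlt q ((hmem q).mp hq))
  have hd : L.Pairwise PDist := by
    refine List.Pairwise.imp_of_mem ?_ P.nodup_toList
    intro a b ha hb hab
    exact hdist a (Finset.mem_toList.mp ha) b (Finset.mem_toList.mp hb) hab
  have hlen : L.length = k := by rw [hLdef, Finset.length_toList, hcard]
  have hDP : DP P (andT (p := p) T) = DL L (andT (p := p) T) := rfl
  set e : Fin n × Fin n → Fin n := fun q => if q.1 ∈ T then q.1 else q.2 with hedef
  have hinj : Set.InjOn e ↑P := by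
    intro q hq r hr heq
    by_contra hqr
    obtain ⟨d1, d2, d3, d4⟩ := hdist q hq r hr hqr
    simp only [hedef] at heq
    split_ifs at heq
    · exact d1 heq
    · exact d2 heq
    · exact d3 heq
    · exact d4 heq
  have hsub : ∀ (hgood : ∀ q ∈ P, (q.1 ∈ T ∧ q.2 ∉ T) ∨ (q.1 ∉ T ∧ q.2 ∈ T)),
      P.image e ⊆ T := by
    intro hgood a ha
    rcases Finset.mem_image.mp ha with ⟨q, hq, rfl⟩
    rcases hgood q hq with ⟨h1, h2⟩ | ⟨h1, h2⟩
    · simpa [hedef, h1] using h1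
    · simpa [hedef, h1] using h2
  constructor
  · -- |T| < k
    intro hTk
    rw [hDP]
    by_cases hgood : ∀ q ∈ P, (q.1 ∈ T ∧ q.2 ∉ T) ∨ (q.1 ∉ T ∧ q.2 ∈ T)
    · exfalso
      have hk : k ≤ T.card := by
        calc k = P.card := hcard.symm
          _ = (P.image e).card := (Finset.card_image_of_injOn hinj).symm
          _ ≤ T.card := Finset.card_le_card (hsub hgood)
      omega
    · push_neg at hgood
      obtain ⟨q, hq, hbad⟩ := hgood
      exact DL_andT_bad (p := p) L T hd hne ⟨q, (hmem q).mpr hq, by tauto⟩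
  · intro hTk
    constructor
    · -- some pair is bad
      intro hgood
      rw [hDP]
      push_neg at hgood
      obtain ⟨q, hq, hbad⟩ := hgood
      exact DL_andT_bad (p := p) L T hd hne ⟨q, (hmem q).mpr hq, by tauto⟩
    · -- all pairs good
      intro hgood
      have hgood' : ∀ q ∈ L, (q.1 ∈ T ∧ q.2 ∉ T) ∨ (q.1 ∉ T ∧ q.2 ∈ T) :=
        fun q hq => hgood q ((hmem q).mp hq)
      have hB := DL_andT_good (p := p) L T hd hne hgood'
      have himg : P.image e = T :=
        Finset.eq_of_subset_of_card_le (hsub hgood)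
          (by rw [Finset.card_image_of_injOn hinj, hcard, hTk])
      have hrem : remT L T = ∅ := by
        rw [Finset.eq_empty_iff_forall_notMem]
        intro a ha
        rw [mem_remT] at ha
        have haT := ha.1
        rw [← himg, Finset.mem_image] at haT
        obtain ⟨q, hq, hqa⟩ := haT
        have hq2 := ha.2 q ((hmem q).mpr hq)
        by_cases h1 : q.1 ∈ T
        · simp only [hedef, if_pos h1] at hqa; exact hq2.1 hqa.symm
        · simp only [hedef, if_neg h1] at hqa; exact hq2.2 hqa.symm
      have hsplit : ∀ x : SlicePoint n p,
          (L.map fun q => (if q.2 ∈ T then (1 : ℝ) else -1) *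
              (coordR x q.2 - coordR x q.1)).prod =
          (L.map fun q => (if q.2 ∈ T then (1 : ℝ) else -1)).prod * PsiP P x := by
        intro x
        rw [List.prod_map_mul]
        congr 1
        exact Finset.prod_map_toList P _
      have hS := list_prod_pm (L.map fun q => (if q.2 ∈ T then (1 : ℝ) else -1))
        (by
          intro y hy
          rcases List.mem_map.mp hy with ⟨q, _, rfl⟩
          split_ifs <;> simp)
      rcases hS with h1 | h1
      · left
        rw [hDP, hB]
        funext x
        rw [hsplit x, hrem, h1, hlen]
        simp [andT]
      · right
        rw [hDP, hB]
        funext x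
        rw [hsplit x, hrem, h1, hlen]
        simp [andT]
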